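/- Let N = 2^k·N₀ with k ≥ 1 and N₀ odd, and let P_N denote the characteristic polynomial of the adjacency matrix C_N of the modular Collatz graph mod N. Then P_N(x) = x^{N/2} · P_{N/2}(x). -/

import Mathlib

/-- The Collatz function. -/
def collatzT (n : ℕ) : ℕ := if n % 2 = 0 then n / 2 else (3 * n + 1) / 2

/-- Adjacency matrix (over ℤ) of the modular Collatz graph mod `N`:
`c i j` counts `n ∈ {0,…,2N−1}` with `n ≡ i` and `T n ≡ j (mod N)`. -/
def collatzMat (N : ℕ) : Matrix (Fin N) (Fin N) ℤ :=
  fun i j =>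
    (((Finset.range (2 * N)).filter
      (fun n => n % N = i.val ∧ collatzT n % N = j.val)).card : ℤ)

lemma collatzT_add_two_mul (n M : ℕ) (hM : 0 < M) :
    collatzT (n + 2 * M) % (2 * M) = (collatzT n + M) % (2 * M) := by
  unfold collatzT
  have h2 : (n + 2 * M) % 2 = n % 2 := by omega
  rw [h2]
  rcases Nat.even_or_odd n with he | ho
  · have hn : n % 2 = 0 := Nat.even_iff.mp he
    simp only [hn, if_pos rfl]
    have : (n + 2 * M) / 2 = n / 2 + M := by omega
    rw [this]
    simp
  · have hn : n % 2 = 1 := Nat.odd_iff.mp ho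
    simp only [hn]
    norm_num
    have : 3 * (n + 2 * M) + 1 = (3 * n + 1) + 2 * (3 * M) := by ring
    rw [this, Nat.add_mul_div_left _ _ (by norm_num : (0:ℕ) < 2)]
    have : (3 * n + 1) / 2 + 3 * M = ((3 * n + 1) / 2 + M) + 2 * M := by ring
    rw [this, Nat.add_mod_right]

-- closed form for entries
lemma collatzMat_apply (N : ℕ) (i j : Fin N) :
    collatzMat N i j = (if collatzT i.val % N = j.val then (1:ℤ) else 0)
      + (if collatzT (i.val + N) % N = j.val then (1:ℤ) else 0) := by
  have hN : 0 < N := i.pos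
  have hset : (Finset.range (2 * N)).filter
      (fun n => n % N = i.val ∧ collatzT n % N = j.val)
      = ({i.val, i.val + N} : Finset ℕ).filter (fun n => collatzT n % N = j.val) := by
    ext n
    simp only [Finset.mem_filter, Finset.mem_range, Finset.mem_insert, Finset.mem_singleton]
    constructor
    · rintro ⟨hn, hmod, hT⟩
      have hd := Nat.div_add_mod n N
      have hlt : n / N < 2 := Nat.div_lt_of_lt_mul (by omega)
      rcases Nat.le_one_iff_eq_zero_or_eq_one.mp (Nat.lt_succ_iff.mp hlt) with h | h <;> rw [h, hmod] at hd <;>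
        exact ⟨by omega, hT⟩
    · rintro ⟨h, hT⟩
      have hi := i.isLt
      rcases h with rfl | rfl
      · exact ⟨by omega, Nat.mod_eq_of_lt hi, hT⟩
      · refine ⟨by omega, ?_, hT⟩
        rw [Nat.add_mod_right]
        exact Nat.mod_eq_of_lt hi
  unfold collatzMat
  rw [hset, Finset.card_filter, Finset.sum_pair (by omega : i.val ≠ i.val + N)]
  push_cast
  ring

-- cancel add mod
lemma add_mod_cancel_iff (x y M N : ℕ) :
    (x + M) % N = (y + M) % N ↔ x % N = y % N :=
  ⟨fun h => Nat.ModEq.add_right_cancel' M h, fun h => Nat.ModEq.add_right M h⟩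

-- Lemma B
lemma indicator_pair (M b x : ℕ) (hM : 0 < M) (hb : b < M) :
    (if x % (2 * M) = b then (1:ℤ) else 0) + (if (x + M) % (2 * M) = b then (1:ℤ) else 0)
      = if x % M = b then (1:ℤ) else 0 := by
  set q := x % (2 * M) with hq
  have hq2 : q < 2 * M := Nat.mod_lt _ (by omega)
  have hqM : q % M = x % M := Nat.mod_mod_of_dvd x ⟨2, by ring⟩
  have hx2 : (x + M) % (2 * M) = (q + M) % (2 * M) := by
    rw [Nat.add_mod x M (2*M), Nat.mod_eq_of_lt (show M < 2*M by omega)]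
  rcases lt_or_ge q M with h | h
  · have h1 : q % M = q := Nat.mod_eq_of_lt h
    have h2 : (q + M) % (2 * M) = q + M := Nat.mod_eq_of_lt (by omega)
    rw [hx2, h2, ← hqM, h1]
    have : ¬ (q + M = b) := by omega
    simp [this]
  · have h1 : q % M = q - M := by
      rw [Nat.mod_eq_sub_mod h, Nat.mod_eq_of_lt (by omega)]
    have h2 : (q + M) % (2 * M) = q - M := by
      rw [Nat.mod_eq_sub_mod (by omega : 2 * M ≤ q + M)]
      have hqq : q + M - 2 * M = q - M := by omega
      rw [hqq, Nat.mod_eq_of_lt (by omega)]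
    rw [hx2, h2, ← hqM, h1]
    have : ¬ (q = b) := by omega
    simp [this]

open Polynomial in
lemma charpoly_fromBlocks_pair {m : ℕ} (P R : Matrix (Fin m) (Fin m) ℤ) :
    (Matrix.fromBlocks P P R R).charpoly = Polynomial.X ^ m * (P + R).charpoly := by
  classical
  set DX : Matrix (Fin m) (Fin m) ℤ[X] := Matrix.scalar (Fin m) (X : ℤ[X]) with hDX
  have hchar : ∀ A : Matrix (Fin m) (Fin m) ℤ, Matrix.charmatrix A = DX - A.map C := by
    intro A
    rw [Matrix.charmatrix, RingHom.mapMatrix_apply]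
  set V : Matrix (Fin m ⊕ Fin m) (Fin m ⊕ Fin m) ℤ[X] := Matrix.fromBlocks 1 0 1 1 with hV
  set W : Matrix (Fin m ⊕ Fin m) (Fin m ⊕ Fin m) ℤ[X] := Matrix.fromBlocks 1 0 (-1) 1 with hW
  have hdetV : V.det = 1 := by
    rw [hV, Matrix.det_fromBlocks_zero₁₂]; simp
  have hdetW : W.det = 1 := by
    rw [hW, Matrix.det_fromBlocks_zero₁₂]; simp
  have hprod : V * (Matrix.charmatrix (Matrix.fromBlocks P P R R)) * W
      = Matrix.fromBlocks DX (-(P.map C)) 0 (Matrix.charmatrix (P + R)) := by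
    rw [Matrix.charmatrix_fromBlocks, Matrix.fromBlocks_multiply, Matrix.fromBlocks_multiply]
    rw [hchar, hchar, hchar, Matrix.map_add]
    rw [Matrix.fromBlocks_inj]
    refine ⟨by noncomm_ring, by noncomm_ring, by noncomm_ring, by noncomm_ring⟩
    exact fun a b => map_add C a b
  have hdet : (Matrix.charmatrix (Matrix.fromBlocks P P R R)).det
      = (Matrix.fromBlocks DX (-(P.map C)) 0 (Matrix.charmatrix (P + R))).det := by
    rw [← hprod, Matrix.det_mul, Matrix.det_mul, hdetV, hdetW, one_mul, mul_one]
  have hDXdet : DX.det = (X : ℤ[X]) ^ m := by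
    rw [hDX]
    simp [Matrix.scalar, Matrix.det_diagonal]
  rw [Matrix.charpoly, hdet, Matrix.det_fromBlocks_zero₂₁, hDXdet, Matrix.charpoly]

lemma col_shift (M : ℕ) (hM : 0 < M) (i j j' : Fin (2 * M))
    (hj' : j'.val = (j.val + M) % (2 * M)) :
    collatzMat (2 * M) i j = collatzMat (2 * M) i j' := by
  rw [collatzMat_apply, collatzMat_apply, hj', collatzT_add_two_mul i.val M hM]
  set t := collatzT i.val with ht
  have hjlt : j.val % (2 * M) = j.val := Nat.mod_eq_of_lt j.isLt
  have h1 := add_mod_cancel_iff t j.val M (2 * M)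
  rw [hjlt] at h1
  have h2 := (add_mod_cancel_iff (t + M) j.val M (2 * M)).symm
  rw [hjlt, show t + M + M = t + 2 * M from by ring, Nat.add_mod_right] at h2
  simp only [h2, ← h1]
  ring

lemma row_sum (M : ℕ) (hM : 0 < M) (a b : Fin M) (a1 a2 b' : Fin (2 * M))
    (ha1 : a1.val = a.val) (ha2 : a2.val = a.val + M) (hb' : b'.val = b.val) :
    collatzMat (2 * M) a1 b' + collatzMat (2 * M) a2 b' = collatzMat M a b := by
  rw [collatzMat_apply, collatzMat_apply, collatzMat_apply, ha1, ha2, hb',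
    collatzT_add_two_mul a.val M hM, collatzT_add_two_mul (a.val + M) M hM]
  have e1 := indicator_pair M b.val (collatzT a.val) hM b.isLt
  have e2 := indicator_pair M b.val (collatzT (a.val + M)) hM b.isLt
  rw [e1, e2]

theorem charpoly_even_modulus (N N₀ k : ℕ) (hk : 1 ≤ k) (hN₀ : Odd N₀)
    (hN : N = 2 ^ k * N₀) :
    (collatzMat N).charpoly = Polynomial.X ^ (N / 2) * (collatzMat (N / 2)).charpoly := by
  subst hN
  have hN₀pos : 0 < N₀ := hN₀.pos
  have hpos : 0 < 2 ^ k * N₀ := by positivity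
  obtain ⟨M, h2M⟩ : ∃ M, 2 ^ k * N₀ = 2 * M :=
    ⟨2 ^ (k - 1) * N₀, by rw [← mul_assoc, ← pow_succ']; congr 2; omega⟩
  have hM : 0 < M := by omega
  rw [h2M]
  have hd : 2 * M / 2 = M := by omega
  rw [hd]
  -- reindex along Fin M ⊕ Fin M ≃ Fin (2 * M)
  have hMM : M + M = 2 * M := by ring
  set E : Fin M ⊕ Fin M ≃ Fin (2 * M) := finSumFinEquiv.trans (finCongr hMM) with hE
  have hEl : ∀ a : Fin M, (E (Sum.inl a)).val = a.val := by
    intro a; simp [hE, finSumFinEquiv]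
  have hEr : ∀ a : Fin M, (E (Sum.inr a)).val = M + a.val := by
    intro a
    simp only [hE, Equiv.trans_apply, finSumFinEquiv_apply_right, finCongr_apply,
      Fin.coe_cast, Fin.natAdd_mk]
    rfl
  set P : Matrix (Fin M) (Fin M) ℤ :=
    fun a b => collatzMat (2 * M) (E (Sum.inl a)) (E (Sum.inl b)) with hP
  set R : Matrix (Fin M) (Fin M) ℤ :=
    fun a b => collatzMat (2 * M) (E (Sum.inr a)) (E (Sum.inl b)) with hR
  have hcol : ∀ (i : Fin (2 * M)) (j : Fin M),
      collatzMat (2 * M) i (E (Sum.inr j)) = collatzMat (2 * M) i (E (Sum.inl j)) := by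
    intro i j
    have hjlt : (j : ℕ) < M := j.isLt
    refine (col_shift M hM i (E (Sum.inl j)) (E (Sum.inr j)) ?_).symm
    rw [hEr, hEl, Nat.mod_eq_of_lt (by omega)]
    omega
  have hblock : Matrix.reindex E.symm E.symm (collatzMat (2 * M)) = Matrix.fromBlocks P P R R := by
    ext p q
    rcases p with i | i <;> rcases q with j | j <;>
      simp only [Matrix.reindex_apply, Matrix.submatrix_apply, Equiv.symm_symm,
        Matrix.fromBlocks_apply₁₁, Matrix.fromBlocks_apply₁₂, Matrix.fromBlocks_apply₂₁,
        Matrix.fromBlocks_apply₂₂, hP, hR]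
    · rfl
    · exact hcol _ j
    · rfl
    · exact hcol _ j
  have hPR : P + R = collatzMat M := by
    ext a b
    have halt : (a : ℕ) < M := a.isLt
    exact row_sum M hM a b _ _ _ (hEl a) (by rw [hEr]; omega) (hEl b)
  calc (collatzMat (2 * M)).charpoly
      = (Matrix.reindex E.symm E.symm (collatzMat (2 * M))).charpoly :=
        (Matrix.charpoly_reindex E.symm _).symm
    _ = (Matrix.fromBlocks P P R R).charpoly := by rw [hblock]
    _ = Polynomial.X ^ M * (P + R).charpoly := charpoly_fromBlocks_pair P R
    _ = Polynomial.X ^ M * (collatzMat M).charpoly := by rw [hPR]
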